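/- Let G be a flow graph with start vertex s and dominator tree D, and let (x,y) be an inserted edge with x and y reachable. Then all vertices affected by the insertion of (x,y) are descendants in D of a single common child c of nca(x,y); specifically, c is the child of nca(x,y) that is an ancestor of y in D. -/

import Mathlib

open scoped Classical

namespace Dominators

variable {V : Type*}

/-- A walk in a digraph `E` from `u` to `w`, recorded as the list of its vertices. -/
inductive Walk (E : V → V → Prop) : V → V → List V → Prop
  | nil (v : V) : Walk E v v [v]
  | cons {u v w : V} {p : List V} (h : E u v) (hw : Walk E v w p) : Walk E u w (u :: p)

/-- `v` is reachable from `s` in the flow graph `(E, s)`. -/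
def Reachable (E : V → V → Prop) (s v : V) : Prop := ∃ p, Walk E s v p

/-- `v` dominates `w` in the flow graph `(E, s)`: every walk from `s` to `w` contains `v`.
In the dominator tree `D`, `v` is an ancestor of `w` iff `v` dominates `w`. -/
def Dom (E : V → V → Prop) (s v w : V) : Prop := ∀ p, Walk E s w p → v ∈ p

/-- `v` is the immediate dominator of `w` (the parent of `w` in the dominator tree):
a proper dominator of `w` that is dominated by every proper dominator of `w`. -/
def IsIdom (E : V → V → Prop) (s v w : V) : Prop :=
  v ≠ w ∧ Dom E s v w ∧ ∀ u, u ≠ w → Dom E s u w → Dom E s u v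

/-- `z` is the nearest common ancestor of `x` and `y` in the dominator tree of `(E, s)`. -/
def IsNca (E : V → V → Prop) (s z x y : V) : Prop :=
  Dom E s z x ∧ Dom E s z y ∧ ∀ u, Dom E s u x → Dom E s u y → Dom E s u z

/-- The graph obtained from `E` by inserting the edge `(x, y)`. -/
def Ins (E : V → V → Prop) (x y : V) : V → V → Prop := fun a b => E a b ∨ (a = x ∧ b = y)

/-- `v` is affected by the insertion of edge `(x, y)`: its immediate dominator
(parent in the dominator tree) changes. -/
def Affected (E : V → V → Prop) (s x y v : V) : Prop :=
  ∃ a b, IsIdom E s a v ∧ IsIdom (Ins E x y) s b v ∧ a ≠ b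

/-- `depth` is a depth function for the dominator tree of `(E, s)`. -/
def IsDepth (E : V → V → Prop) (s : V) (depth : V → ℕ) : Prop :=
  depth s = 0 ∧ ∀ v u, Reachable E s v → v ≠ s → IsIdom E s u v → depth v = depth u + 1

/-- `δ` is a preorder of the dominator tree of `(E, s)`: it is injective on reachable
vertices, every vertex precedes (or equals) its descendants, and the descendants of every
vertex are consecutive. -/
def IsPreorderOfD (E : V → V → Prop) (s : V) (δ : V → ℕ) : Prop :=
  (∀ u v, Reachable E s u → Reachable E s v → u ≠ v → δ u ≠ δ v) ∧
  (∀ v u, Reachable E s u → Dom E s v u → δ v ≤ δ u) ∧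
  (∀ v a b, Reachable E s b → Dom E s v a → δ v ≤ δ b → δ b ≤ δ a → Dom E s v b)

/-- `δ` is a low-high order for the vertex `v` in `(E, s)`: either the edge from the
parent `d(v)` of `v` in the dominator tree is in `E`, or `v` has two entering edges
`(u, v)` and `(w, v)` with `u`, `w` reachable, `u <_δ v <_δ w`, and `w` not a
descendant of `v` in the dominator tree. -/
def LowHighFor (E : V → V → Prop) (s : V) (δ : V → ℕ) (v : V) : Prop :=
  (∃ q, IsIdom E s q v ∧ E q v) ∨
  ∃ u w, E u v ∧ E w v ∧ Reachable E s u ∧ Reachable E s w ∧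
    δ u < δ v ∧ δ v < δ w ∧ ¬ Dom E s v w

/-- `δ` is a low-high order of the flow graph `(E, s)`. -/
def IsLowHigh (E : V → V → Prop) (s : V) (δ : V → ℕ) : Prop :=
  IsPreorderOfD E s δ ∧ ∀ v, Reachable E s v → v ≠ s → LowHighFor E s δ v

/-- The edge relation of the spanning tree with parent function `par`, rooted at `s`,
on the vertices reachable in `(E, s)`. -/
def TreeRel (E : V → V → Prop) (s : V) (par : V → V) : V → V → Prop :=
  fun a b => Reachable E s b ∧ b ≠ s ∧ par b = a

/-- `par` is (the parent function of) a spanning tree of the flow graph `(E, s)`. -/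
def IsSpanningTree (E : V → V → Prop) (s : V) (par : V → V) : Prop :=
  (∀ v, Reachable E s v → v ≠ s → E (par v) v) ∧
  (∀ v, Reachable E s v → ∃ p, Walk (TreeRel E s par) s v p)

/-- The spanning trees with parent functions `b` and `r` are divergent: for every
reachable `v`, the tree paths from `s` to `v` share only the dominators of `v`. -/
def Divergent (E : V → V → Prop) (s : V) (b r : V → V) : Prop :=
  ∀ v p q, Reachable E s v → Walk (TreeRel E s b) s v p → Walk (TreeRel E s r) s v q →
    ∀ u, u ∈ p → u ∈ q → Dom E s u v

section Aux

variable {E : V → V → Prop} {s x y z c : V}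

lemma Walk.end_mem {u w : V} {p : List V} (h : Walk E u w p) : w ∈ p := by
  induction h with
  | nil v => exact List.mem_singleton_self v
  | cons h hw ih => exact List.mem_cons_of_mem _ ih

/-- Prefix of a walk ending at the first occurrence of `v`. -/
lemma walk_prefix {u w v : V} {p : List V} (h : Walk E u w p) (hv : v ∈ p) :
    ∃ q, Walk E u v q ∧ (∀ t ∈ q, t ∈ p) ∧ (v ≠ w → q.length < p.length) := by
  induction h with
  | nil t =>
    rcases List.mem_singleton.mp hv with rfl
    exact ⟨[v], Walk.nil v, fun t ht => ht, fun h => absurd rfl h⟩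
  | @cons a b w p h hw ih =>
    by_cases hva : v = a
    · subst hva
      refine ⟨[v], Walk.nil v, fun t ht => ?_, fun hne => ?_⟩
      · rcases List.mem_singleton.mp ht with rfl; exact List.mem_cons_self
      · have hne' : p ≠ [] := by rintro rfl; cases hw
        have hlen := List.length_pos_iff.mpr hne'
        simpa using hlen
    · have hvp : v ∈ p := by
        rcases List.mem_cons.mp hv with h' | h'
        · exact absurd h' hva
        · exact h'
      rcases ih hvp with ⟨q, hq, hsub, hlen⟩
      refine ⟨a :: q, Walk.cons h hq, fun t ht => ?_, fun hne => ?_⟩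
      · rcases List.mem_cons.mp ht with rfl | ht
        · exact List.mem_cons_self
        · exact List.mem_cons_of_mem _ (hsub t ht)
      · simpa using Nat.succ_lt_succ (hlen hne)

lemma reachable_of_dom {v w : V} (h : Dom E s v w) (hw : Reachable E s w) :
    Reachable E s v := by
  rcases hw with ⟨p, hp⟩
  rcases walk_prefix hp (h p hp) with ⟨q, hq, -, -⟩
  exact ⟨q, hq⟩

lemma dom_trans {u w t : V} (h1 : Dom E s u w) (h2 : Dom E s w t) : Dom E s u t := by
  intro p hp
  rcases walk_prefix hp (h2 p hp) with ⟨q, hq, hsub, -⟩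
  exact hsub u (h1 q hq)

/-- Antisymmetry of domination on reachable vertices. -/
lemma dom_antisymm_aux :
    ∀ n : ℕ, ∀ {a b : V} {p : List V}, Walk E s b p → p.length ≤ n →
      Dom E s a b → Dom E s b a → a ≠ b → False := by
  intro n
  induction n with
  | zero =>
    intro a b p hp hlen _ _ _
    cases hp <;> simp at hlen
  | succ n ih =>
    intro a b p hp hlen h1 h2 hne
    rcases walk_prefix hp (h1 p hp) with ⟨q, hq, -, hlt⟩
    have := hlt hne
    exact ih hq (by omega) h2 h1 (Ne.symm hne)

/-- Antisymmetry of domination on reachable vertices. -/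
lemma dom_antisymm {a b : V} (h1 : Dom E s a b) (h2 : Dom E s b a) (hne : a ≠ b)
    (hb : Reachable E s b) : False := by
  rcases hb with ⟨p, hp⟩
  exact dom_antisymm_aux p.length hp le_rfl h1 h2 hne

/-- Suffix of a walk starting at the last occurrence of `w`: the walk continues
within the tail of the original list after the first vertex. -/
lemma walk_suffix {u t w : V} {p : List V} (h : Walk E u t p) (hw : w ∈ p) :
    ∃ q, Walk E w t q ∧ (∀ r ∈ q, r ∈ p) ∧ (w ∉ q.tail) := by
  induction h with
  | nil v =>
    rcases List.mem_singleton.mp hw with rfl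
    exact ⟨[w], Walk.nil w, fun r hr => hr, by simp⟩
  | @cons a b t p h hwp ih =>
    by_cases hwp' : w ∈ p
    · rcases ih hwp' with ⟨q, hq, hsub, htail⟩
      exact ⟨q, hq, fun r hr => List.mem_cons_of_mem _ (hsub r hr), htail⟩
    · have hwa : w = a := by
        rcases List.mem_cons.mp hw with h' | h'
        · exact h'
        · exact absurd h' hwp'
      subst hwa
      exact ⟨w :: p, Walk.cons h hwp, fun r hr => hr, hwp'⟩

lemma walk_append {a t : V} {p q : List V} (h1 : Walk E s a p) (h2 : Walk E a t q) :
    ∃ r, Walk E s t r ∧ ∀ u ∈ r, u ∈ p ∨ u ∈ q := by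
  induction h1 with
  | nil v => exact ⟨q, h2, fun u hu => Or.inr hu⟩
  | @cons a' b' w p h hw ih =>
    rcases ih h2 with ⟨r, hr, hsub⟩
    refine ⟨a' :: r, Walk.cons h hr, fun u hu => ?_⟩
    rcases List.mem_cons.mp hu with rfl | hu
    · exact Or.inl (List.mem_cons_self)
    · rcases hsub u hu with h' | h'
      · exact Or.inl (List.mem_cons_of_mem _ h')
      · exact Or.inr h'

/-- Dominators of a reachable vertex are totally ordered by domination. -/
lemma dom_chain {u w t : V} (hu : Dom E s u t) (hw : Dom E s w t)
    (ht : Reachable E s t) : Dom E s u w ∨ Dom E s w u := by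
  by_contra hcon
  push_neg at hcon
  obtain ⟨huw, hwu⟩ := hcon
  rcases not_forall.mp huw with ⟨A, hA⟩
  rcases not_forall.mp hA with ⟨hAwalk, hAu⟩
  rcases not_forall.mp hwu with ⟨B, hB⟩
  rcases not_forall.mp hB with ⟨hBwalk, hBw⟩
  rcases ht with ⟨P, hP⟩
  rcases walk_suffix hP (hw P hP) with ⟨Q, hQ, hQsub, hQtail⟩
  by_cases huQ : u ∈ Q
  · -- u is in the suffix from the last occurrence of w; u ≠ w
    have hune : u ≠ w := by rintro rfl; exact hAu (Walk.end_mem hAwalk)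
    cases hQ with
    | nil v =>
      rcases List.mem_singleton.mp huQ with rfl
      exact hune rfl
    | @cons a b t' p h hwp =>
      have hup : u ∈ p := by
        rcases List.mem_cons.mp huQ with rfl | h'
        · exact absurd rfl hune
        · exact h'
      rcases walk_suffix hwp hup with ⟨Q2, hQ2, hQ2sub, -⟩
      have hwQ2 : w ∉ Q2 := fun hmem => hQtail (hQ2sub w hmem)
      rcases walk_append hBwalk hQ2 with ⟨r, hr, hrsub⟩
      have := hw r hr
      rcases hrsub w this with h' | h'
      · exact hBw h'
      · exact hwQ2 h'
  · rcases walk_append hAwalk hQ with ⟨r, hr, hrsub⟩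
    have := hu r hr
    rcases hrsub u this with h' | h'
    · exact hAu h'
    · exact huQ h'

lemma walk_mono {u v : V} {p : List V} (h : Walk E u v p) : Walk (Ins E x y) u v p := by
  induction h with
  | nil v => exact Walk.nil v
  | cons h hw ih => exact Walk.cons (Or.inl h) ih

lemma dom_of_dom_ins {u v : V} (h : Dom (Ins E x y) s u v) : Dom E s u v :=
  fun p hp => h p (walk_mono hp)

/-- Decomposition of a walk in the augmented graph: either it is a walk in `E`,
or it yields a walk in `E` to `x` and a walk in `E` from `y`. -/
lemma walk_ins_decomp {u v : V} {p : List V} (h : Walk (Ins E x y) u v p) :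
    (∃ q, Walk E u v q ∧ ∀ t ∈ q, t ∈ p) ∨
    ((∃ q1, Walk E u x q1 ∧ ∀ t ∈ q1, t ∈ p) ∧ (∃ q2, Walk E y v q2 ∧ ∀ t ∈ q2, t ∈ p)) := by
  induction h with
  | nil v => exact Or.inl ⟨[v], Walk.nil v, fun t ht => ht⟩
  | @cons a b w p h hw ih =>
    rcases h with h | ⟨rfl, rfl⟩
    · rcases ih with ⟨q, hq, hsub⟩ | ⟨⟨q1, hq1, hsub1⟩, ⟨q2, hq2, hsub2⟩⟩
      · exact Or.inl ⟨a :: q, Walk.cons h hq, fun t ht => by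
          rcases List.mem_cons.mp ht with rfl | ht
          · exact List.mem_cons_self
          · exact List.mem_cons_of_mem _ (hsub t ht)⟩
      · refine Or.inr ⟨⟨a :: q1, Walk.cons h hq1, fun t ht => ?_⟩,
          ⟨q2, hq2, fun t ht => List.mem_cons_of_mem _ (hsub2 t ht)⟩⟩
        rcases List.mem_cons.mp ht with rfl | ht
        · exact List.mem_cons_self
        · exact List.mem_cons_of_mem _ (hsub1 t ht)
    · refine Or.inr ⟨⟨[a], Walk.nil a, fun t ht => ?_⟩, ?_⟩
      · rcases List.mem_singleton.mp ht with rfl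
        exact List.mem_cons_self
      · rcases ih with ⟨q, hq, hsub⟩ | ⟨-, ⟨q2, hq2, hsub2⟩⟩
        · exact ⟨q, hq, fun t ht => List.mem_cons_of_mem _ (hsub t ht)⟩
        · exact ⟨q2, hq2, fun t ht => List.mem_cons_of_mem _ (hsub2 t ht)⟩

end Aux

/-- All vertices affected by the insertion of edge `(x,y)` are descendants
in the dominator tree of the common child `c` of `nca(x,y)`; `c` is the child of
`nca(x,y)` that is an ancestor of `y`. -/
theorem stmt3 (E : V → V → Prop) (s x y z c : V)
    (hx : Reachable E s x) (hy : Reachable E s y)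
    (hz : IsNca E s z x y)
    (hczc : IsIdom E s z c) (hcy : Dom E s c y) :
    ∀ v, Affected E s x y v → Dom E s c v := by
  rintro v ⟨a, b, ha, hb, hab⟩
  by_cases hv : Reachable E s v
  · by_contra hnc
    -- b is an old dominator of v, hence dominates a
    have hbv : Dom E s b v := dom_of_dom_ins hb.2.1
    have hba : Dom E s b a := ha.2.2 b hb.1 hbv
    -- reachability facts
    have hzr : Reachable E s z := reachable_of_dom hz.1 hx
    have har : Reachable E s a := reachable_of_dom ha.2.1 hv
    have hbr : Reachable E s b := reachable_of_dom hbv hv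
    -- key claim: a dominates v in the augmented graph
    have hanew : Dom (Ins E x y) s a v := by
      intro p hp
      by_contra hap
      rcases walk_ins_decomp hp with ⟨q, hq, hsub⟩ | ⟨⟨q1, hq1, hsub1⟩, ⟨q2, hq2, hsub2⟩⟩
      · exact hap (hsub a (ha.2.1 q hq))
      · have hax : ¬ Dom E s a x := fun h => hap (hsub1 a (h q1 hq1))
        have haq2 : a ∉ q2 := fun h => hap (hsub2 a h)
        have hay : Dom E s a y := by
          intro r hr
          rcases walk_append hr hq2 with ⟨w, hw, hwsub⟩
          rcases hwsub a (ha.2.1 w hw) with h' | h'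
          · exact h'
          · exact absurd h' haq2
        rcases dom_chain hay hz.2.1 hy with h1 | h1
        · exact hax (dom_trans h1 hz.1)
        · -- z dominates a
          rcases dom_chain hay hcy hy with h2 | h2
          · -- a dominates c
            have hac : a ≠ c := by rintro rfl; exact hnc ha.2.1
            have hac' : a ≠ c := hac
            have haz : Dom E s a z := hczc.2.2 a hac h2
            have hane : a ≠ z := by rintro rfl; exact hax hz.1
            exact dom_antisymm haz h1 hane hzr
          · exact hnc (dom_trans h2 ha.2.1)
    -- hence a dominates b in the new (and old) graph
    have hab' : Dom E s a b := dom_of_dom_ins (hb.2.2 a ha.1 hanew)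
    exact dom_antisymm hab' hba hab hbr
  · intro p hp
    exact absurd ⟨p, hp⟩ hv

end Dominators
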